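/- Let H be a finite-dimensional real inner product space, f : H → ℝ convex and differentiable, A ⊆ H a nonempty compact set with C := conv(A), δ ∈ (0, 1] and x ∈ H. Suppose s ∈ H satisfies ⟨∇f(x), s − x⟩ ≤ δ·inf_{s' ∈ A} ⟨∇f(x), s' − x⟩. Then ⟨∇f(x), x − s⟩ ≥ δ·(f(x) − ψ(∇f(x))), where ψ(u) := −f*(u) − σ_C(−u), f*(u) := sup_{y ∈ H} (⟨u, y⟩ − f(y)) is the convex (Fenchel) conjugate of f, and σ_C(u) := sup_{z ∈ C} ⟨u, z⟩ is the support function of C. -/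

import Mathlib

open scoped RealInnerProductSpace

/-- Gradient inequality: a convex differentiable function lies above its tangent plane. -/
lemma tangent_le {H : Type*} [NormedAddCommGroup H] [InnerProductSpace ℝ H]
    (f : H → ℝ) (hconv : ConvexOn ℝ Set.univ f) (x gradf : H)
    (hgrad : HasFDerivAt f ((innerSL ℝ) gradf) x) (y : H) :
    f x + ⟪gradf, y - x⟫ ≤ f y := by
  set γ : ℝ → H := fun t => (AffineMap.lineMap x y : ℝ →ᵃ[ℝ] H) t with hγ
  have hγ0 : γ 0 = x := by simp [hγ]
  have hγ1 : γ 1 = y := by simp [hγ]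
  have hγconv : ConvexOn ℝ Set.univ (f ∘ γ) := by
    have : ConvexOn ℝ ((AffineMap.lineMap x y : ℝ →ᵃ[ℝ] H) ⁻¹' Set.univ)
        (f ∘ (AffineMap.lineMap x y : ℝ →ᵃ[ℝ] H)) :=
      hconv.comp_affineMap _
    simpa [Set.preimage_univ] using this
  have hγd : HasDerivAt γ (y - x) 0 := by
    have h := ((hasDerivAt_id (0 : ℝ)).smul_const (y - x)).add_const x
    have heq : γ = fun t : ℝ => t • (y - x) + x := by
      funext t
      show (AffineMap.lineMap x y) t = t • (y - x) + x
      rw [AffineMap.lineMap_apply_module]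
      rw [smul_sub, sub_smul, one_smul]; abel
    rw [heq]
    simpa using h
  have hgrad' : HasFDerivAt f ((innerSL ℝ) gradf) (γ 0) := by rw [hγ0]; exact hgrad
  have hcomp : HasDerivAt (f ∘ γ) ⟪gradf, y - x⟫ 0 := by
    simpa using hgrad'.comp_hasDerivAt 0 hγd
  have hle := hγconv.le_slope_of_hasDerivAt (Set.mem_univ (0 : ℝ)) (Set.mem_univ (1 : ℝ))
    one_pos hcomp
  have hslope : slope (f ∘ γ) 0 1 = f y - f x := by
    simp [slope_def_field, Function.comp, hγ0, hγ1]
  rw [hslope] at hle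
  linarith

/-- Relation between the directional gap of an approximate LMO output and the primal-dual
gap `f(x) − ψ(∇f(x))`, where `ψ(u) = −f*(u) − σ_C(−u)` with `f*` the Fenchel conjugate of
`f` and `σ_C` the support function of `C = conv(A)`. -/
theorem stmt_11 {H : Type*} [NormedAddCommGroup H] [InnerProductSpace ℝ H]
    [FiniteDimensional ℝ H]
    (f : H → ℝ) (hconv : ConvexOn ℝ Set.univ f) (hdiff : Differentiable ℝ f)
    (A : Set H) (hA : A.Nonempty) (hAc : IsCompact A)
    (δ : ℝ) (hδ : δ ∈ Set.Ioc (0 : ℝ) 1) (x gradf : H)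
    (hgrad : HasFDerivAt f ((innerSL ℝ) gradf) x) (s : H)
    (hs : ⟪gradf, s - x⟫ ≤ δ * sInf ((fun s' => ⟪gradf, s' - x⟫) '' A)) :
    ⟪gradf, x - s⟫ ≥
      δ * (f x - (-(sSup (Set.range fun y => ⟪gradf, y⟫ - f y))
        - sSup ((fun z => ⟪-gradf, z⟫) '' convexHull ℝ A))) := by
  obtain ⟨hδ0, hδ1⟩ := hδ
  -- Fenchel conjugate value: f*(gradf) = ⟪gradf, x⟫ - f x
  have hub : ∀ y : H, ⟪gradf, y⟫ - f y ≤ ⟪gradf, x⟫ - f x := by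
    intro y
    have h := tangent_le f hconv x gradf hgrad y
    have hinner : ⟪gradf, y - x⟫ = ⟪gradf, y⟫ - ⟪gradf, x⟫ := inner_sub_right _ _ _
    linarith
  have hFY : sSup (Set.range fun y => ⟪gradf, y⟫ - f y) = ⟪gradf, x⟫ - f x := by
    apply le_antisymm
    · apply csSup_le (Set.range_nonempty _)
      rintro b ⟨y, rfl⟩
      exact hub y
    · refine le_csSup ?_ ⟨x, rfl⟩
      exact ⟨⟪gradf, x⟫ - f x, by rintro b ⟨y, rfl⟩; exact hub y⟩
  -- the support function over the convex hull equals that over A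
  have hcont : Continuous fun z : H => ⟪-gradf, z⟫ := (innerSL ℝ (-gradf)).continuous
  have hAim : IsCompact ((fun z => ⟪-gradf, z⟫) '' A) := hAc.image hcont
  have hAimne : ((fun z => ⟪-gradf, z⟫) '' A).Nonempty := hA.image _
  set T := sSup ((fun z => ⟪-gradf, z⟫) '' A) with hT
  have hTmem : T ∈ (fun z => ⟪-gradf, z⟫) '' A := hAim.sSup_mem hAimne
  have hTub : ∀ a ∈ A, ⟪-gradf, a⟫ ≤ T := fun a ha =>
    le_csSup hAim.bddAbove ⟨a, ha, rfl⟩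
  have hhull : sSup ((fun z => ⟪-gradf, z⟫) '' convexHull ℝ A) = T := by
    have hsub : convexHull ℝ A ⊆ {z | ⟪-gradf, z⟫ ≤ T} := by
      apply convexHull_min
      · exact fun a ha => hTub a ha
      · exact convex_halfSpace_le
          ⟨fun y z => inner_add_right _ _ _, fun c y => inner_smul_right _ _ _⟩ T
    apply le_antisymm
    · apply csSup_le ((hA.mono (subset_convexHull ℝ A)).image _)
      rintro b ⟨z, hz, rfl⟩
      exact hsub hz
    · exact csSup_le_csSup ⟨T, by rintro b ⟨z, hz, rfl⟩; exact hsub hz⟩ hAimne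
        (Set.image_mono (subset_convexHull ℝ A))
  -- compute the infimum
  have hcont2 : Continuous fun s' : H => ⟪gradf, s' - x⟫ :=
    (innerSL ℝ gradf).continuous.comp (continuous_id.sub continuous_const)
  have hIim : IsCompact ((fun s' => ⟪gradf, s' - x⟫) '' A) := hAc.image hcont2
  have hInf : sInf ((fun s' => ⟪gradf, s' - x⟫) '' A) = -T - ⟪gradf, x⟫ := by
    apply le_antisymm
    · obtain ⟨a, ha, hav⟩ := hTmem
      have hav' : ⟪-gradf, a⟫ = T := hav
      have h2 : (fun s' => ⟪gradf, s' - x⟫) a = -T - ⟪gradf, x⟫ := by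
        show ⟪gradf, a - x⟫ = -T - ⟪gradf, x⟫
        rw [inner_sub_right, ← hav', inner_neg_left]; ring
      rw [← h2]
      exact csInf_le hIim.bddBelow ⟨a, ha, rfl⟩
    · apply le_csInf (hA.image _)
      rintro b ⟨a, ha, rfl⟩
      have h1 := hTub a ha
      rw [inner_neg_left] at h1
      show -T - ⟪gradf, x⟫ ≤ ⟪gradf, a - x⟫
      rw [inner_sub_right]
      linarith
  rw [hFY, hhull]
  rw [hInf] at hs
  rw [inner_sub_right] at hs ⊢
  have hkey : δ * (f x - (-(⟪gradf, x⟫ - f x) - T)) = -(δ * (-T - ⟪gradf, x⟫)) := by ring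
  rw [ge_iff_le, hkey]
  linarith
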